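/- (Twisted lattice-point recursion, generalizing the Chapman–Mulase–Safnuk recursion.) Let (A, η) be a finite-dimensional commutative Frobenius algebra over a field K of characteristic zero, with basis e₁, …, e_s, Euler element 𝐞, and amplitudes Ω_{g,n}(v₁,…,vₙ) = ε(v₁⋯vₙ·𝐞^g). Suppose given, for all integers g ≥ 0, n ≥ 1, functions N_{g,n} : (ℤ_{≥0})^n → K (with N_{g,n} := 0 whenever g < 0) which satisfy, for every (g,n) with 2g−2+n > 0 and every μ ∈ (ℤ_{≥0})^n: μ₁ N_{g,n}(μ) = (1/2) Σ_{j=2}^{n} [ Σ_{q=0}^{μ₁+μ_j} q(μ₁+μ_j−q) N_{g,n−1}(q, μ_{[n]∖{1,j}}) + H(μ₁−μ_j) Σ_{q=0}^{μ₁−μ_j} q(μ₁−μ_j−q) N_{g,n−1}(q, μ_{[n]∖{1,j}}) − H(μ_j−μ₁) Σ_{q=0}^{μ_j−μ₁} q(μ_j−μ₁−q) N_{g,n−1}(q, μ_{[n]∖{1,j}}) ] + (1/2) Σ_{0 ≤ q₁+q₂ ≤ μ₁} q₁ q₂ (μ₁−q₁−q₂) [ N_{g−1,n+1}(q₁, q₂,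 μ_{[n]∖{1}}) + Σ^{stable}_{g₁+g₂=g, I⊔J={2,…,n}} N_{g₁,|I|+1}(q₁, μ_I) N_{g₂,|J|+1}(q₂, μ_J) ], where H is the Heaviside function (H(x)=1 if x>0, H(x)=0 if x≤0) and 'stable' excludes the pairs (g_i, |·|+1) of type (0,1) and (0,2). Define 𝒩_{g,n}(μ; v₁,…,vₙ) := N_{g,n}(μ) · Ω_{g,n}(v₁,…,vₙ). Then the twisted recursion holds: μ₁ 𝒩_{g,n}(μ; v₁,…,vₙ) equals the same right-hand side with each N_{g,n−1}(q, μ_{[n]∖{1,j}}) replaced by 𝒩_{g,n−1}(q, μ_{[n]∖{1,j}}; v₁·v_j, v_{[n]∖{1,j}}), the term N_{g−1,n+1}(q₁,q₂,μ_{[n]∖{1}}) replaced by Σ_{i,j,a,b} η(v₁, e_i·e_j) η^{ia} η^{jb} 𝒩_{g−1,n+1}(q₁, q₂, μ_{[n]∖{1}}; e_a, e_b, v_{[n]∖{1}}), and each product N_{g₁,|I|+1}(q₁,μ_I) N_{g₂,|J|+1}(q₂,μ_J) replaced by Σ_{k,ℓ,a,b} η(v₁, e_k·e_ℓ) η^{ka}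 η^{ℓb} 𝒩_{g₁,|I|+1}(q₁, μ_I; e_a, v_I) 𝒩_{g₂,|J|+1}(q₂, μ_J; e_b, v_J). -/

import Mathlib

/-- The subtuple of a tuple `f : Fin m → α` indexed by a finite set `S` of indices,
taken in increasing order. -/
noncomputable def subT {α : Type*} {m : ℕ} (f : Fin m → α) (S : Finset (Fin m)) :
    Fin S.card → α :=
  fun i => f (S.orderIsoOfFin rfl i)

/-- The 2D TQFT twist `𝒩_{g,n}(μ; v₁,…,vₙ) := N_{g,n}(μ)·Ω_{g,n}(v₁,…,vₙ)` of the
lattice-point counting function `Nf`, where `Ω_{g,n}(v₁,…,vₙ) = ε(v₁⋯vₙ·𝐞^g)`,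
`ε = η(1,·)` and `E = 𝐞` is the Euler element (for `g < 0` the convention
`N_{g,n} = 0` makes the value vanish). -/
noncomputable def twistN {K A : Type*} [Field K] [CommRing A] [Algebra K A]
    (η : LinearMap.BilinForm K A) (E : A)
    (Nf : ℤ → (n : ℕ) → (Fin n → ℕ) → K)
    (g : ℤ) (n : ℕ) (μ : Fin n → ℕ) (v : Fin n → A) : K :=
  Nf g n μ * η 1 ((∏ i, v i) * E ^ g.toNat)

lemma prod_subT {M : Type*} [CommMonoid M] {m : ℕ} (f : Fin m → M) (S : Finset (Fin m)) :
    ∏ i, subT f S i = ∏ i ∈ S, f i := by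
  rw [← Finset.prod_coe_sort S f]
  exact Fintype.prod_equiv (S.orderIsoOfFin rfl).toEquiv _ _ (fun i => rfl)

lemma res {K A : Type*} [Field K] [CommRing A] [Algebra K A]
    (η : LinearMap.BilinForm K A) {s : ℕ} (e : Module.Basis (Fin s) K A)
    (N : Matrix (Fin s) (Fin s) K)
    (hN : (Matrix.of fun i j => η (e i) (e j)) * N = 1)
    (x w : A) :
    ∑ l, ∑ b, η x (e l) * N l b * η (e b) w = η x w := by
  have hGN : ∀ c b : Fin s, (∑ l, η (e c) (e l) * N l b) = if c = b then 1 else 0 := by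
    intro c b
    have h := congrFun (congrFun hN c) b
    simpa [Matrix.mul_apply, Matrix.one_apply] using h
  have key : (∑ l, ∑ b, (N l b * η (e b) w) • (η.flip (e l)) : A →ₗ[K] K) = η.flip w := by
    apply e.ext
    intro c
    simp only [LinearMap.coe_sum, Finset.sum_apply, LinearMap.smul_apply,
      LinearMap.flip_apply, smul_eq_mul]
    calc ∑ l, ∑ b, (N l b * η (e b) w) * η (e c) (e l)
        = ∑ b, (∑ l, η (e c) (e l) * N l b) * η (e b) w := by
          rw [Finset.sum_comm]
          simp_rw [Finset.sum_mul]
          exact Finset.sum_congr rfl fun b _ => Finset.sum_congr rfl fun l _ => by ring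
      _ = η (e c) w := by simp [hGN, ite_mul]
  have hx := congrArg (fun F : A →ₗ[K] K => F x) key
  simp only [LinearMap.coe_sum, Finset.sum_apply, LinearMap.smul_apply,
    LinearMap.flip_apply, smul_eq_mul] at hx
  calc ∑ l, ∑ b, η x (e l) * N l b * η (e b) w
      = ∑ l, ∑ b, (N l b * η (e b) w) * η x (e l) :=
        Finset.sum_congr rfl fun l _ => Finset.sum_congr rfl fun b _ => by ring
    _ = η x w := hx

section
variable {K A : Type*} [Field K] [CommRing A] [Algebra K A]
  (η : LinearMap.BilinForm K A)
  (hsym : ∀ u v : A, η u v = η v u)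
  (hinv : ∀ u v w : A, η (u * v) w = η u (v * w))
  {s : ℕ} (e : Module.Basis (Fin s) K A)
  (N : Matrix (Fin s) (Fin s) K)
  (hN : (Matrix.of fun i j => η (e i) (e j)) * N = 1)
  (hN' : N * (Matrix.of fun i j => η (e i) (e j)) = 1)

include hsym hN hN' in
lemma Nsym : ∀ a b, N a b = N b a := by
  have hG : (Matrix.of fun i j => η (e i) (e j)).transpose
      = Matrix.of fun i j => η (e i) (e j) := by
    ext i j; simp [Matrix.transpose_apply, hsym (e j) (e i)]
  have hT : N.transpose = N := by
    calc N.transpose = N.transpose * ((Matrix.of fun i j => η (e i) (e j)) * N) := by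
          rw [hN, Matrix.mul_one]
      _ = (N.transpose * (Matrix.of fun i j => η (e i) (e j)).transpose) * N := by
          rw [hG, Matrix.mul_assoc]
      _ = ((Matrix.of fun i j => η (e i) (e j)) * N).transpose * N := by
          rw [Matrix.transpose_mul]
      _ = N := by rw [hN, Matrix.transpose_one, Matrix.one_mul]
  intro a b
  have := congrFun (congrFun hT b) a
  simpa [Matrix.transpose_apply] using this

include hsym hinv hN hN' in
lemma glue2 (x X Y : A) :
    ∑ k, ∑ l, ∑ a, ∑ b, η x (e k * e l) * N k a * N l b * (η 1 (e a * X) * η 1 (e b * Y))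
      = η 1 (x * X * Y) := by
  have eps : ∀ u y : A, η 1 (u * y) = η u y := fun u y => by rw [← hinv, one_mul]
  have hNs := Nsym η hsym e N hN hN'
  have step1 : ∀ k a, ∑ l, ∑ b,
      η x (e k * e l) * N k a * N l b * (η 1 (e a * X) * η 1 (e b * Y))
        = (N k a * η (e a) X) * η (x * e k) Y := by
    intro k a
    have hterm : ∀ l b, η x (e k * e l) * N k a * N l b * (η 1 (e a * X) * η 1 (e b * Y))
        = (N k a * η (e a) X) * (η (x * e k) (e l) * N l b * η (e b) Y) := by
      intro l b; rw [eps, eps, ← hinv]; ring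
    simp_rw [hterm, ← Finset.mul_sum]
    rw [res η e N hN (x * e k) Y]
  calc ∑ k, ∑ l, ∑ a, ∑ b, η x (e k * e l) * N k a * N l b * (η 1 (e a * X) * η 1 (e b * Y))
      = ∑ k, ∑ a, ∑ l, ∑ b,
          η x (e k * e l) * N k a * N l b * (η 1 (e a * X) * η 1 (e b * Y)) :=
        Finset.sum_congr rfl fun k _ => Finset.sum_comm
    _ = ∑ k, ∑ a, (N k a * η (e a) X) * η (x * e k) Y :=
        Finset.sum_congr rfl fun k _ => Finset.sum_congr rfl fun a _ => step1 k a
    _ = ∑ a, ∑ k, η X (e a) * N a k * η (e k) (x * Y) := by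
        rw [Finset.sum_comm]
        refine Finset.sum_congr rfl fun a _ => Finset.sum_congr rfl fun k _ => ?_
        rw [hsym (e a) X, hNs k a, show x * e k = e k * x from mul_comm _ _, hinv]
        ring
    _ = η X (x * Y) := res η e N hN X (x * Y)
    _ = η 1 (x * X * Y) := by
        rw [eps (x * X) Y, show x * X = X * x from mul_comm _ _, hinv]

include hinv hN in
lemma glue1 (E : A) (hE : E = ∑ a, ∑ b, N a b • (e a * e b)) (x W : A) :
    ∑ i, ∑ j, ∑ a, ∑ b, η x (e i * e j) * N i a * N j b * η 1 (e a * e b * W)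
      = η 1 (E * (x * W)) := by
  have eps : ∀ u y : A, η 1 (u * y) = η u y := fun u y => by rw [← hinv, one_mul]
  have step1 : ∀ i a, ∑ j, ∑ b, η x (e i * e j) * N i a * N j b * η 1 (e a * e b * W)
      = N i a * η (x * e i) (e a * W) := by
    intro i a
    have hterm : ∀ j b, η x (e i * e j) * N i a * N j b * η 1 (e a * e b * W)
        = N i a * (η (x * e i) (e j) * N j b * η (e b) (e a * W)) := by
      intro j b
      rw [show e a * e b * W = (e b * (e a * W)) from by ring, eps, ← hinv, ← hinv]
      ring
    simp_rw [hterm, ← Finset.mul_sum]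
    rw [res η e N hN (x * e i) (e a * W)]
  calc ∑ i, ∑ j, ∑ a, ∑ b, η x (e i * e j) * N i a * N j b * η 1 (e a * e b * W)
      = ∑ i, ∑ a, ∑ j, ∑ b, η x (e i * e j) * N i a * N j b * η 1 (e a * e b * W) :=
        Finset.sum_congr rfl fun i _ => Finset.sum_comm
    _ = ∑ i, ∑ a, N i a * η (x * e i) (e a * W) :=
        Finset.sum_congr rfl fun i _ => Finset.sum_congr rfl fun a _ => step1 i a
    _ = ∑ i, ∑ a, η 1 ((N i a • (e i * e a)) * (x * W)) := by
        refine Finset.sum_congr rfl fun i _ => Finset.sum_congr rfl fun a _ => ?_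
        rw [smul_mul_assoc, map_smul, smul_eq_mul, ← eps]
        congr 1; ring
    _ = η 1 (E * (x * W)) := by
        rw [hE, Finset.sum_mul]
        simp_rw [Finset.sum_mul, map_sum]
end


/-- (Twisted lattice-point recursion, generalizing the
Chapman–Mulase–Safnuk recursion.) If the lattice-point counting functions `N_{g,n}`
satisfy the CMS recursion (with Heaviside cutoffs and stability excluding `(0,1)` and
`(0,2)` pieces in the splitting sum), then their twists
`𝒩_{g,n}(μ; v) = N_{g,n}(μ)·Ω_{g,n}(v)` by the 2D TQFT of the Frobenius algebra `(A, η)`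
satisfy the twisted recursion, in which genus–reduction and splitting terms are contracted
through the coproduct coefficients `Σ η(v₁, e_i·e_j) η^{ia} η^{jb} (…e_a…)(…e_b…)`. -/
theorem stmt12 (K A : Type*) [Field K] [CharZero K] [CommRing A] [Algebra K A]
    (η : LinearMap.BilinForm K A)
    (hsym : ∀ u v : A, η u v = η v u)
    (hnd : ∀ v : A, (∀ u : A, η v u = 0) → v = 0)
    (hinv : ∀ u v w : A, η (u * v) w = η u (v * w))
    {s : ℕ} (e : Module.Basis (Fin s) K A)
    (N : Matrix (Fin s) (Fin s) K)
    (hN : (Matrix.of fun i j => η (e i) (e j)) * N = 1)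
    (hN' : N * (Matrix.of fun i j => η (e i) (e j)) = 1)
    (E : A) (hE : E = ∑ a, ∑ b, N a b • (e a * e b))
    (Nf : ℤ → (n : ℕ) → (Fin n → ℕ) → K)
    (hNneg : ∀ g : ℤ, g < 0 → ∀ (n : ℕ) (μ : Fin n → ℕ), Nf g n μ = 0)
    (hrec : ∀ (g m : ℕ) (μ : Fin (m + 1) → ℕ),
      0 < 2 * (g : ℤ) - 2 + (m + 1) →
      (μ 0 : K) * Nf g (m + 1) μ =
        (1 / 2 : K) * (∑ j : Fin m,
            ((∑ q ∈ Finset.range (μ 0 + μ j.succ + 1),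
                (q : K) * ((μ 0 + μ j.succ - q : ℕ) : K) *
                  Nf g (({j}ᶜ : Finset (Fin m)).card + 1)
                    (Fin.cons q (subT (Fin.tail μ) {j}ᶜ)))
              + (if μ j.succ < μ 0 then (1 : K) else 0) *
                  ∑ q ∈ Finset.range (μ 0 - μ j.succ + 1),
                    (q : K) * ((μ 0 - μ j.succ - q : ℕ) : K) *
                      Nf g (({j}ᶜ : Finset (Fin m)).card + 1)
                        (Fin.cons q (subT (Fin.tail μ) {j}ᶜ))
              - (if μ 0 < μ j.succ then (1 : K) else 0) *
                  ∑ q ∈ Finset.range (μ j.succ - μ 0 + 1),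
                    (q : K) * ((μ j.succ - μ 0 - q : ℕ) : K) *
                      Nf g (({j}ᶜ : Finset (Fin m)).card + 1)
                        (Fin.cons q (subT (Fin.tail μ) {j}ᶜ))))
        + (1 / 2 : K) * ∑ q₁ ∈ Finset.range (μ 0 + 1),
            ∑ q₂ ∈ Finset.range (μ 0 + 1 - q₁),
              (q₁ : K) * (q₂ : K) * ((μ 0 - q₁ - q₂ : ℕ) : K) *
                (Nf ((g : ℤ) - 1) (m + 2)
                    (Fin.cons q₁ (Fin.cons q₂ (Fin.tail μ)))
                  + ∑ g₁ ∈ Finset.range (g + 1), ∑ S : Finset (Fin m),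
                      if (g₁ = 0 ∧ S.card ≤ 1) ∨ (g₁ = g ∧ Sᶜ.card ≤ 1) then 0
                      else
                        Nf g₁ (S.card + 1) (Fin.cons q₁ (subT (Fin.tail μ) S)) *
                          Nf ((g : ℤ) - g₁) (Sᶜ.card + 1)
                            (Fin.cons q₂ (subT (Fin.tail μ) Sᶜ)))) :
    ∀ (g m : ℕ) (μ : Fin (m + 1) → ℕ) (v : Fin (m + 1) → A),
      0 < 2 * (g : ℤ) - 2 + (m + 1) →
      (μ 0 : K) * twistN η E Nf g (m + 1) μ v =
        (1 / 2 : K) * (∑ j : Fin m,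
            ((∑ q ∈ Finset.range (μ 0 + μ j.succ + 1),
                (q : K) * ((μ 0 + μ j.succ - q : ℕ) : K) *
                  twistN η E Nf g (({j}ᶜ : Finset (Fin m)).card + 1)
                    (Fin.cons q (subT (Fin.tail μ) {j}ᶜ))
                    (Fin.cons (v 0 * v j.succ) (subT (Fin.tail v) {j}ᶜ)))
              + (if μ j.succ < μ 0 then (1 : K) else 0) *
                  ∑ q ∈ Finset.range (μ 0 - μ j.succ + 1),
                    (q : K) * ((μ 0 - μ j.succ - q : ℕ) : K) *
                      twistN η E Nf g (({j}ᶜ : Finset (Fin m)).card + 1)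
                        (Fin.cons q (subT (Fin.tail μ) {j}ᶜ))
                        (Fin.cons (v 0 * v j.succ) (subT (Fin.tail v) {j}ᶜ))
              - (if μ 0 < μ j.succ then (1 : K) else 0) *
                  ∑ q ∈ Finset.range (μ j.succ - μ 0 + 1),
                    (q : K) * ((μ j.succ - μ 0 - q : ℕ) : K) *
                      twistN η E Nf g (({j}ᶜ : Finset (Fin m)).card + 1)
                        (Fin.cons q (subT (Fin.tail μ) {j}ᶜ))
                        (Fin.cons (v 0 * v j.succ) (subT (Fin.tail v) {j}ᶜ))))
        + (1 / 2 : K) * ∑ q₁ ∈ Finset.range (μ 0 + 1),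
            ∑ q₂ ∈ Finset.range (μ 0 + 1 - q₁),
              (q₁ : K) * (q₂ : K) * ((μ 0 - q₁ - q₂ : ℕ) : K) *
                ((∑ i, ∑ j, ∑ a, ∑ b,
                    η (v 0) (e i * e j) * N i a * N j b *
                      twistN η E Nf ((g : ℤ) - 1) (m + 2)
                        (Fin.cons q₁ (Fin.cons q₂ (Fin.tail μ)))
                        (Fin.cons (e a) (Fin.cons (e b) (Fin.tail v))))
                  + ∑ g₁ ∈ Finset.range (g + 1), ∑ S : Finset (Fin m),
                      if (g₁ = 0 ∧ S.card ≤ 1) ∨ (g₁ = g ∧ Sᶜ.card ≤ 1) then 0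
                      else
                        ∑ k, ∑ l, ∑ a, ∑ b,
                          η (v 0) (e k * e l) * N k a * N l b *
                            (twistN η E Nf g₁ (S.card + 1)
                                (Fin.cons q₁ (subT (Fin.tail μ) S))
                                (Fin.cons (e a) (subT (Fin.tail v) S)) *
                              twistN η E Nf ((g : ℤ) - g₁) (Sᶜ.card + 1)
                                (Fin.cons q₂ (subT (Fin.tail μ) Sᶜ))
                                (Fin.cons (e b) (subT (Fin.tail v) Sᶜ)))) := by
  intro g m μ v h
  have hg : ((g : ℕ) : ℤ).toNat = g := Int.toNat_natCast g
  have eps : ∀ u y : A, η 1 (u * y) = η u y := fun u y => by rw [← hinv, one_mul]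
  set Ω := η 1 ((∏ i, v i) * E ^ g) with hΩ
  have hv : ∏ i, v i = v 0 * ∏ i, Fin.tail v i := by
    rw [Fin.prod_univ_succ]; rfl
  have hA : ∀ (j : Fin m) (q : ℕ),
      twistN η E Nf g (({j}ᶜ : Finset (Fin m)).card + 1)
        (Fin.cons q (subT (Fin.tail μ) {j}ᶜ))
        (Fin.cons (v 0 * v j.succ) (subT (Fin.tail v) {j}ᶜ))
      = Nf g (({j}ᶜ : Finset (Fin m)).card + 1)
          (Fin.cons q (subT (Fin.tail μ) {j}ᶜ)) * Ω := by
    intro j q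
    simp only [twistN, hg, Fin.prod_cons, prod_subT, hΩ]
    congr 2
    rw [hv]
    have h2 := Finset.prod_mul_prod_compl ({j} : Finset (Fin m)) (Fin.tail v)
    rw [Finset.prod_singleton] at h2
    rw [← h2, show Fin.tail v j = v j.succ from rfl]
    ring
  have hB : ∀ q₁ q₂ : ℕ,
      (∑ i, ∑ j, ∑ a, ∑ b,
        η (v 0) (e i * e j) * N i a * N j b *
          twistN η E Nf ((g : ℤ) - 1) (m + 2)
            (Fin.cons q₁ (Fin.cons q₂ (Fin.tail μ)))
            (Fin.cons (e a) (Fin.cons (e b) (Fin.tail v))))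
      = Nf ((g : ℤ) - 1) (m + 2) (Fin.cons q₁ (Fin.cons q₂ (Fin.tail μ))) * Ω := by
    intro q₁ q₂
    rcases Nat.eq_zero_or_pos g with hg0 | hg1
    · subst hg0
      have hz : ∀ (n : ℕ) (ν : Fin n → ℕ), Nf (-1) n ν = 0 := hNneg _ (by norm_num)
      simp [twistN, hz]
    · have hgt : ((g : ℤ) - 1).toNat = g - 1 := by omega
      have hterm : ∀ i j a b : Fin s,
          η (v 0) (e i * e j) * N i a * N j b *
            twistN η E Nf ((g : ℤ) - 1) (m + 2)
              (Fin.cons q₁ (Fin.cons q₂ (Fin.tail μ)))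
              (Fin.cons (e a) (Fin.cons (e b) (Fin.tail v)))
          = Nf ((g : ℤ) - 1) (m + 2) (Fin.cons q₁ (Fin.cons q₂ (Fin.tail μ))) *
              (η (v 0) (e i * e j) * N i a * N j b *
                η 1 (e a * e b * ((∏ i, Fin.tail v i) * E ^ (g - 1)))) := by
        intro i j a b
        simp only [twistN, hgt, Fin.prod_cons]
        rw [congrArg (fun z : A => η 1 z)
          (show (e a * (e b * ∏ i, Fin.tail v i)) * E ^ (g - 1)
            = e a * e b * ((∏ i, Fin.tail v i) * E ^ (g - 1)) by ring)]
        ring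
      simp_rw [hterm, ← Finset.mul_sum]
      rw [glue1 η hinv e N hN E hE (v 0) ((∏ i, Fin.tail v i) * E ^ (g - 1))]
      congr 1
      rw [hΩ]
      congr 1
      rw [hv, show E ^ g = E ^ (g - 1) * E from by
        rw [← pow_succ]; congr 1; omega]
      ring
  have hC : ∀ (g₁ : ℕ) (S : Finset (Fin m)) (q₁ q₂ : ℕ),
      (∑ k, ∑ l, ∑ a, ∑ b,
        η (v 0) (e k * e l) * N k a * N l b *
          (twistN η E Nf g₁ (S.card + 1)
              (Fin.cons q₁ (subT (Fin.tail μ) S))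
              (Fin.cons (e a) (subT (Fin.tail v) S)) *
            twistN η E Nf ((g : ℤ) - g₁) (Sᶜ.card + 1)
              (Fin.cons q₂ (subT (Fin.tail μ) Sᶜ))
              (Fin.cons (e b) (subT (Fin.tail v) Sᶜ))))
      = Nf g₁ (S.card + 1) (Fin.cons q₁ (subT (Fin.tail μ) S)) *
          Nf ((g : ℤ) - g₁) (Sᶜ.card + 1) (Fin.cons q₂ (subT (Fin.tail μ) Sᶜ)) * Ω := by
    intro g₁ S q₁ q₂
    by_cases hle : g₁ ≤ g
    · have h1 : ((g₁ : ℕ) : ℤ).toNat = g₁ := Int.toNat_natCast g₁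
      have h2 : ((g : ℤ) - (g₁ : ℕ)).toNat = g - g₁ := by omega
      have hterm : ∀ k l a b : Fin s,
          η (v 0) (e k * e l) * N k a * N l b *
            (twistN η E Nf g₁ (S.card + 1)
                (Fin.cons q₁ (subT (Fin.tail μ) S))
                (Fin.cons (e a) (subT (Fin.tail v) S)) *
              twistN η E Nf ((g : ℤ) - g₁) (Sᶜ.card + 1)
                (Fin.cons q₂ (subT (Fin.tail μ) Sᶜ))
                (Fin.cons (e b) (subT (Fin.tail v) Sᶜ)))
          = (Nf g₁ (S.card + 1) (Fin.cons q₁ (subT (Fin.tail μ) S)) *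
              Nf ((g : ℤ) - g₁) (Sᶜ.card + 1) (Fin.cons q₂ (subT (Fin.tail μ) Sᶜ))) *
              (η (v 0) (e k * e l) * N k a * N l b *
                (η 1 (e a * ((∏ i ∈ S, Fin.tail v i) * E ^ g₁)) *
                  η 1 (e b * ((∏ i ∈ Sᶜ, Fin.tail v i) * E ^ (g - g₁))))) := by
        intro k l a b
        simp only [twistN, h1, h2, Fin.prod_cons, prod_subT]
        rw [congrArg (fun z : A => η 1 z)
          (show (e a * ∏ i ∈ S, Fin.tail v i) * E ^ g₁
            = e a * ((∏ i ∈ S, Fin.tail v i) * E ^ g₁) from mul_assoc _ _ _)]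
        rw [congrArg (fun z : A => η 1 z)
          (show (e b * ∏ i ∈ Sᶜ, Fin.tail v i) * E ^ (g - g₁)
            = e b * ((∏ i ∈ Sᶜ, Fin.tail v i) * E ^ (g - g₁)) from mul_assoc _ _ _)]
        ring
      simp_rw [hterm, ← Finset.mul_sum]
      rw [glue2 η hsym hinv e N hN hN' (v 0)
        ((∏ i ∈ S, Fin.tail v i) * E ^ g₁)
        ((∏ i ∈ Sᶜ, Fin.tail v i) * E ^ (g - g₁))]
      congr 1
      rw [hΩ]
      congr 1
      rw [hv, show E ^ g = E ^ g₁ * E ^ (g - g₁) from by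
        rw [← pow_add]; congr 1; omega,
        ← Finset.prod_mul_prod_compl S (Fin.tail v)]
      ring
    · have hz : ∀ (n : ℕ) (ν : Fin n → ℕ), Nf ((g : ℤ) - g₁) n ν = 0 :=
        hNneg _ (by omega)
      simp [twistN, hz]
  have hL : (μ 0 : K) * twistN η E Nf g (m + 1) μ v
      = ((μ 0 : K) * Nf g (m + 1) μ) * Ω := by
    simp only [twistN, hg, hΩ]; ring
  rw [hL, hrec g m μ h]
  simp only [hA, hB, hC]
  simp only [add_mul, sub_mul, ite_mul, zero_mul, one_mul, Finset.sum_mul, mul_assoc]
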